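/- arXiv:1807.01282 — 3 statements merged into one kernel-verified Lean document; each statement's English description precedes it below -/
import Mathlib

section
/- Let T be a bounded operator on a Hilbert space such that for some constants c > 0: (i) Im⟨φ, Tφ⟩ + c‖Tφ‖² ≥ d‖φ‖² for all φ, and (ii) -Im⟨φ, T*φ⟩ + c‖T*φ‖² ≥ d‖φ‖² for all φ, with d > 0. Then T is bijective with bounded inverse. -/
open ContinuousLinearMap

lemma lower_bound_aux {ℋ : Type*} [NormedAddCommGroup ℋ] [InnerProductSpace ℂ ℋ]
    (T : ℋ →L[ℂ] ℋ) (c d : ℝ) (hc : 0 < c) (hd : 0 < d)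
    (h : ∀ φ : ℋ, d * ‖φ‖ ^ 2 ≤ ‖φ‖ * ‖T φ‖ + c * ‖T φ‖ ^ 2) :
    ∀ φ : ℋ, min 1 (d / (1 + c)) * ‖φ‖ ≤ ‖T φ‖ := by
  intro φ
  set ε := min 1 (d / (1 + c)) with hε
  have hεpos : 0 < ε := lt_min one_pos (div_pos hd (by linarith))
  by_contra hcon
  push_neg at hcon
  have hφpos : 0 < ‖φ‖ := by
    rcases lt_or_ge 0 ‖φ‖ with h' | h'
    · exact h'
    · have : ‖φ‖ = 0 := le_antisymm h' (norm_nonneg _)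
      rw [this, mul_zero] at hcon
      exact absurd hcon (not_lt.2 (norm_nonneg _))
  have key := h φ
  have hεle1 : ε ≤ 1 := min_le_left _ _
  have hεle : ε ≤ d / (1 + c) := min_le_right _ _
  have hεd : ε * (1 + c) ≤ d := by
    rw [← le_div_iff₀ (by linarith : (0:ℝ) < 1 + c)]; exact hεle
  have hb2 : ‖T φ‖ ^ 2 ≤ (ε * ‖φ‖) ^ 2 := pow_le_pow_left₀ (norm_nonneg _) hcon.le 2
  have he2 : ε ^ 2 ≤ ε := by nlinarith
  have hab : ‖φ‖ * ‖T φ‖ < ‖φ‖ * (ε * ‖φ‖) := mul_lt_mul_of_pos_left hcon hφpos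
  nlinarith [mul_le_mul_of_nonneg_left hb2 hc.le,
    mul_le_mul_of_nonneg_right hεd (sq_nonneg ‖φ‖),
    mul_le_mul_of_nonneg_right (mul_le_mul_of_nonneg_left he2 hc.le) (sq_nonneg ‖φ‖)]

lemma bdd_below_aux {ℋ : Type*} [NormedAddCommGroup ℋ] [InnerProductSpace ℂ ℋ]
    (T : ℋ →L[ℂ] ℋ) (ε : ℝ) (hεpos : 0 < ε) (hT : ∀ φ : ℋ, ε * ‖φ‖ ≤ ‖T φ‖) :
    ∀ x : ℋ, T x = 0 → x = 0 := by
  intro x hx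
  have h := hT x
  rw [hx, norm_zero] at h
  have : ‖x‖ ≤ 0 := by nlinarith [norm_nonneg x]
  exact norm_le_zero_iff.mp this

/-- If `Im⟨φ, Tφ⟩ + c‖Tφ‖² ≥ d‖φ‖²` and `-Im⟨φ, T*φ⟩ + c‖T*φ‖² ≥ d‖φ‖²` for all `φ`,
with `c, d > 0`, then `T` is bijective with bounded inverse. -/
theorem invertible_of_coercive {ℋ : Type*} [NormedAddCommGroup ℋ] [InnerProductSpace ℂ ℋ]
    [CompleteSpace ℋ] (T : ℋ →L[ℂ] ℋ) (c d : ℝ) (hc : 0 < c) (hd : 0 < d)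
    (h1 : ∀ φ : ℋ, d * ‖φ‖ ^ 2 ≤ (inner ℂ φ (T φ) : ℂ).im + c * ‖T φ‖ ^ 2)
    (h2 : ∀ φ : ℋ, d * ‖φ‖ ^ 2 ≤ -(inner ℂ φ ((adjoint T) φ) : ℂ).im + c * ‖(adjoint T) φ‖ ^ 2) :
    ∃ S : ℋ →L[ℂ] ℋ, S.comp T = 1 ∧ T.comp S = 1 := by
  set ε := min 1 (d / (1 + c)) with hε
  have hεpos : 0 < ε := lt_min one_pos (div_pos hd (by linarith))
  have hT : ∀ φ : ℋ, ε * ‖φ‖ ≤ ‖T φ‖ := by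
    apply lower_bound_aux T c d hc hd
    intro φ
    have him : (inner ℂ φ (T φ) : ℂ).im ≤ ‖φ‖ * ‖T φ‖ := by
      have h' := Complex.abs_im_le_norm (inner ℂ φ (T φ) : ℂ)
      have h'' := norm_inner_le_norm (𝕜 := ℂ) φ (T φ)
      linarith [le_abs_self (inner ℂ φ (T φ) : ℂ).im]
    linarith [h1 φ]
  have hT' : ∀ φ : ℋ, ε * ‖φ‖ ≤ ‖(adjoint T) φ‖ := by
    apply lower_bound_aux (adjoint T) c d hc hd
    intro φ
    have him : -(inner ℂ φ ((adjoint T) φ) : ℂ).im ≤ ‖φ‖ * ‖(adjoint T) φ‖ := by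
      have h' := Complex.abs_im_le_norm (inner ℂ φ ((adjoint T) φ) : ℂ)
      have h'' := norm_inner_le_norm (𝕜 := ℂ) φ ((adjoint T) φ)
      have := neg_abs_le (inner ℂ φ ((adjoint T) φ) : ℂ).im
      linarith
    linarith [h2 φ]
  -- injectivity
  have hinj : LinearMap.ker (T : ℋ →ₗ[ℂ] ℋ) = ⊥ := by
    rw [LinearMap.ker_eq_bot']
    exact bdd_below_aux T ε hεpos hT
  -- closed range
  have hanti : AntilipschitzWith ⟨ε⁻¹, (inv_pos.2 hεpos).le⟩ T := by
    apply ContinuousLinearMap.antilipschitz_of_bound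
    intro x
    change ‖x‖ ≤ ε⁻¹ * ‖T x‖
    calc ‖x‖ = ε⁻¹ * (ε * ‖x‖) := by field_simp
      _ ≤ ε⁻¹ * ‖T x‖ :=
        mul_le_mul_of_nonneg_left (hT x) (inv_pos.2 hεpos).le
  have hclosed : IsClosed (LinearMap.range (T : ℋ →ₗ[ℂ] ℋ) : Set ℋ) := by
    have : IsClosed (Set.range T) := hanti.isClosed_range T.uniformContinuous
    simpa [LinearMap.coe_range] using this
  -- density: orthogonal of range is trivial
  have horth : (LinearMap.range (T : ℋ →ₗ[ℂ] ℋ)).orthogonal = ⊥ := by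
    rw [Submodule.eq_bot_iff]
    intro y hy
    have hy' : ∀ x : ℋ, (inner ℂ (T x) y : ℂ) = 0 := by
      intro x
      exact (Submodule.mem_orthogonal (LinearMap.range (T : ℋ →ₗ[ℂ] ℋ)) y).mp hy (T x) ⟨x, rfl⟩
    have hadj : (adjoint T) y = 0 := by
      have : ∀ x : ℋ, (inner ℂ x ((adjoint T) y) : ℂ) = 0 := by
        intro x
        rw [ContinuousLinearMap.adjoint_inner_right]
        exact hy' x
      have := this ((adjoint T) y)
      exact inner_self_eq_zero.mp this
    exact bdd_below_aux (adjoint T) ε hεpos hT' y hadj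
  have hsurj : LinearMap.range (T : ℋ →ₗ[ℂ] ℋ) = ⊤ := by
    haveI : CompleteSpace (LinearMap.range (T : ℋ →ₗ[ℂ] ℋ)) := hclosed.completeSpace_coe
    exact Submodule.orthogonal_eq_bot_iff.mp horth
  let e : ℋ ≃L[ℂ] ℋ := ContinuousLinearEquiv.ofBijective T hinj hsurj
  refine ⟨e.symm.toContinuousLinearMap, ?_, ?_⟩
  · ext x
    exact e.symm_apply_apply x
  · ext x
    exact e.apply_symm_apply x
end

section
/- Let B be a bounded symmetric operator on a Hilbert space and E an orthogonal projection with complement E^⊥ = 1 - E. The following are equivalent: (a) there exists c > 0 with E B E ≥ c E; (b) there exist a > 0, b > 0 with B ≥ a E - b E^⊥; (c) there exist a > 0, b > 0 with B ≥ a·1 - (a + b)E^⊥. (All inequalities in the sense of quadratic forms.) -/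
open ContinuousLinearMap

/-- For bounded selfadjoint `B` and an orthogonal projection `E` with `E^⊥ = 1 - E`,
the following are equivalent (in the sense of quadratic forms):
(a) `EBE ≥ cE` for some `c > 0`;
(b) `B ≥ aE - bE^⊥` for some `a, b > 0`;
(c) `B ≥ a·1 - (a+b)E^⊥` for some `a, b > 0`. -/
theorem projection_form_equivalences {ℋ : Type*} [NormedAddCommGroup ℋ]
    [InnerProductSpace ℂ ℋ] [CompleteSpace ℋ] (B E : ℋ →L[ℂ] ℋ)
    (hB : adjoint B = B) (hE : adjoint E = E) (hE2 : E.comp E = E) :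
    ((∃ c > (0 : ℝ), ∀ ψ : ℋ,
        c * (inner ℂ ψ (E ψ) : ℂ).re ≤ (inner ℂ ψ (E (B (E ψ))) : ℂ).re) ↔
      (∃ a > (0 : ℝ), ∃ b > (0 : ℝ), ∀ ψ : ℋ,
        a * (inner ℂ ψ (E ψ) : ℂ).re - b * (inner ℂ ψ ((1 - E) ψ) : ℂ).re ≤
          (inner ℂ ψ (B ψ) : ℂ).re)) ∧
    ((∃ a > (0 : ℝ), ∃ b > (0 : ℝ), ∀ ψ : ℋ,
        a * (inner ℂ ψ (E ψ) : ℂ).re - b * (inner ℂ ψ ((1 - E) ψ) : ℂ).re ≤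
          (inner ℂ ψ (B ψ) : ℂ).re) ↔
      (∃ a > (0 : ℝ), ∃ b > (0 : ℝ), ∀ ψ : ℋ,
        a * ‖ψ‖ ^ 2 - (a + b) * (inner ℂ ψ ((1 - E) ψ) : ℂ).re ≤
          (inner ℂ ψ (B ψ) : ℂ).re)) := by
  have hEE : ∀ ψ : ℋ, E (E ψ) = E ψ := fun ψ => by
    rw [← ContinuousLinearMap.comp_apply, hE2]
  -- ⟪ψ, E φ⟫ = ⟪E ψ, φ⟫
  have hsa : ∀ (ψ φ : ℋ), (inner ℂ ψ (E φ) : ℂ) = inner ℂ (E ψ) φ := fun ψ φ => by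
    conv_lhs => rw [← hE]
    exact adjoint_inner_right E ψ φ
  have hself : ∀ φ : ℋ, (inner ℂ φ φ : ℂ).re = ‖φ‖ ^ 2 := fun φ => by
    rw [inner_self_eq_norm_sq_to_K]; norm_cast
  -- ⟪ψ, E ψ⟫.re = ‖E ψ‖²
  have hEnorm : ∀ ψ : ℋ, (inner ℂ ψ (E ψ) : ℂ).re = ‖E ψ‖ ^ 2 := fun ψ => by
    have : (inner ℂ ψ (E ψ) : ℂ) = inner ℂ (E ψ) (E ψ) := by
      calc (inner ℂ ψ (E ψ) : ℂ) = inner ℂ ψ (E (E ψ)) := by rw [hEE]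
        _ = inner ℂ (E ψ) (E ψ) := hsa ψ _
    rw [this, hself]
  have hFapp : ∀ ψ : ℋ, (1 - E) ψ = ψ - E ψ := fun ψ => rfl
  have hFsa : ∀ (ψ φ : ℋ), (inner ℂ ψ ((1 - E) φ) : ℂ) = inner ℂ ((1 - E) ψ) φ := by
    intro ψ φ
    rw [hFapp, hFapp, inner_sub_right, inner_sub_left, hsa]
  have hFF : ∀ ψ : ℋ, (1 - E) ((1 - E) ψ) = (1 - E) ψ := fun ψ => by
    simp only [hFapp, map_sub, hEE]
    abel
  -- ⟪ψ, (1-E) ψ⟫.re = ‖ψ - E ψ‖²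
  have hFnorm : ∀ ψ : ℋ, (inner ℂ ψ ((1 - E) ψ) : ℂ).re = ‖ψ - E ψ‖ ^ 2 := fun ψ => by
    have : (inner ℂ ψ ((1 - E) ψ) : ℂ) = inner ℂ ((1 - E) ψ) ((1 - E) ψ) := by
      calc (inner ℂ ψ ((1 - E) ψ) : ℂ) = inner ℂ ψ ((1 - E) ((1 - E) ψ)) := by rw [hFF]
        _ = inner ℂ ((1 - E) ψ) ((1 - E) ψ) := hFsa ψ _
    rw [this, hself, hFapp]
  -- ⟪ψ, E ψ⟫.re + ⟪ψ, (1-E) ψ⟫.re = ‖ψ‖²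
  have hsum : ∀ ψ : ℋ, (inner ℂ ψ (E ψ) : ℂ).re + (inner ℂ ψ ((1 - E) ψ) : ℂ).re = ‖ψ‖ ^ 2 := by
    intro ψ
    have h1 : (inner ℂ ψ ((1 - E) ψ) : ℂ) = inner ℂ ψ ψ - inner ℂ ψ (E ψ) := by
      rw [hFapp, inner_sub_right]
    rw [h1, Complex.sub_re]
    have h3 := hself ψ
    linarith
  constructor
  · constructor
    · rintro ⟨c, hc, h⟩
      set M := ‖B‖ with hM
      have hM0 : 0 ≤ M := norm_nonneg B
      refine ⟨c / 2, by linarith, 2 * M ^ 2 / c + M + 1, by positivity, fun ψ => ?_⟩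
      set x := E ψ with hx
      set y := ψ - E ψ with hy
      have hψ : ψ = x + y := by simp [hx, hy]
      have cross : ∀ u v : ℋ, -(M * ‖u‖ * ‖v‖) ≤ (inner ℂ u (B v) : ℂ).re := by
        intro u v
        have h1 : ‖(inner ℂ u (B v) : ℂ)‖ ≤ ‖u‖ * (M * ‖v‖) := by
          calc ‖(inner ℂ u (B v) : ℂ)‖ ≤ ‖u‖ * ‖B v‖ := norm_inner_le_norm u (B v)
          _ ≤ ‖u‖ * (M * ‖v‖) := by gcongr; exact B.le_opNorm v
        have h2 : |(inner ℂ u (B v) : ℂ).re| ≤ ‖(inner ℂ u (B v) : ℂ)‖ :=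
          Complex.abs_re_le_norm _
        have := (abs_le.mp (le_trans h2 h1)).1
        linarith
      have hxx : c * ‖x‖ ^ 2 ≤ (inner ℂ x (B x) : ℂ).re := by
        have h0 := h ψ
        rw [hEnorm] at h0
        rwa [hsa] at h0
      have hyy := cross y y
      have hxy := cross x y
      have hyx := cross y x
      have expand : (inner ℂ ψ (B ψ) : ℂ).re
          = (inner ℂ x (B x) : ℂ).re + (inner ℂ x (B y) : ℂ).re
            + (inner ℂ y (B x) : ℂ).re + (inner ℂ y (B y) : ℂ).re := by
        conv_lhs => rw [hψ]
        rw [map_add, inner_add_left, inner_add_right, inner_add_right]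
        simp [Complex.add_re]
        ring
      rw [hEnorm, hFnorm, ← hx, ← hy, expand]
      have hge : 0 ≤ (c * ‖x‖ - 2 * M * ‖y‖) ^ 2 / (2 * c) := by positivity
      have expand2 : (c * ‖x‖ - 2 * M * ‖y‖) ^ 2 / (2 * c)
          = c / 2 * ‖x‖ ^ 2 - 2 * M * (‖x‖ * ‖y‖) + 2 * M ^ 2 / c * ‖y‖ ^ 2 := by
        field_simp
        ring
      rw [expand2] at hge
      nlinarith [sq_nonneg ‖y‖]
    · rintro ⟨a, ha, b, hb, h⟩
      refine ⟨a, ha, fun ψ => ?_⟩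
      have h0 := h (E ψ)
      have e0 : (1 - E) (E ψ) = 0 := by simp [hFapp, hEE]
      rw [e0, hEE] at h0
      simp only [inner_zero_right, Complex.zero_re, mul_zero, sub_zero] at h0
      have e1 : (inner ℂ ψ (E (B (E ψ))) : ℂ) = inner ℂ (E ψ) (B (E ψ)) := hsa ψ _
      have e2 : (inner ℂ ψ (E ψ) : ℂ) = inner ℂ (E ψ) (E ψ) := by
        calc (inner ℂ ψ (E ψ) : ℂ) = inner ℂ ψ (E (E ψ)) := by rw [hEE]
          _ = inner ℂ (E ψ) (E ψ) := hsa ψ _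
      rw [e1, e2]
      exact h0
  · constructor
    · rintro ⟨a, ha, b, hb, h⟩
      refine ⟨a, ha, b, hb, fun ψ => ?_⟩
      have h0 := h ψ
      have h2 : a * ((inner ℂ ψ (E ψ) : ℂ).re + (inner ℂ ψ ((1 - E) ψ) : ℂ).re) = a * ‖ψ‖ ^ 2 := by
        rw [hsum]
      linarith
    · rintro ⟨a, ha, b, hb, h⟩
      refine ⟨a, ha, b, hb, fun ψ => ?_⟩
      have h0 := h ψ
      have h2 : a * ((inner ℂ ψ (E ψ) : ℂ).re + (inner ℂ ψ ((1 - E) ψ) : ℂ).re) = a * ‖ψ‖ ^ 2 := by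
        rw [hsum]
      linarith
end

section
/- Let A₀ be the operator on ℓ²(ℤ) acting on basis vectors by A₀eₙ = -i·n·(e_{n+1} - e_{n-1}). Then for all k ∈ ℕ and n ∈ ℤ with n ≠ 0, ‖A₀ᵏeₙ‖ ≤ 2ᵏ·(|n| + k - 1)!/(|n| - 1)!. -/
/-- The canonical basis vector `eₙ`, as a finitely supported function. -/
noncomputable def e (n : ℤ) : ℤ →₀ ℂ := Finsupp.single n 1

/-- The operator `A₀` acting on finite linear combinations of basis vectors by
`A₀ eₙ = -i n (e_{n+1} - e_{n-1})`. -/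
noncomputable def A0 : Module.End ℂ (ℤ →₀ ℂ) :=
  Finsupp.lsum ℂ fun n : ℤ =>
    LinearMap.toSpanSingleton ℂ (ℤ →₀ ℂ)
      ((-Complex.I * (n : ℂ)) • (Finsupp.single (n + 1) 1 - Finsupp.single (n - 1) 1))

/-- The ℓ² norm of a finitely supported function. -/
noncomputable def l2norm (x : ℤ →₀ ℂ) : ℝ := Real.sqrt (∑ m ∈ x.support, ‖x m‖ ^ 2)

noncomputable def l1 (x : ℤ →₀ ℂ) : ℝ := ∑ m ∈ x.support, ‖x m‖

lemma A0_apply (x : ℤ →₀ ℂ) : A0 x = ∑ m ∈ x.support,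
    x m • ((-Complex.I * (m : ℂ)) • (Finsupp.single (m+1) 1 - Finsupp.single (m-1) 1)) := by
  rw [A0, Finsupp.lsum_apply, Finsupp.sum]
  rfl

lemma A0_support (x : ℤ →₀ ℂ) (N : ℕ) (h : ∀ m ∈ x.support, m.natAbs ≤ N) :
    ∀ m ∈ (A0 x).support, m.natAbs ≤ N + 1 := by
  intro m hm
  rw [A0_apply] at hm
  obtain ⟨j, hj, hmj⟩ := Finset.mem_biUnion.mp (Finsupp.support_finset_sum hm)
  have hsub : (x j • ((-Complex.I * (j : ℂ)) •
      (Finsupp.single (j+1) (1:ℂ) - Finsupp.single (j-1) 1))).support ⊆ ({j+1, j-1} : Finset ℤ) := by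
    refine Finsupp.support_smul.trans (Finsupp.support_smul.trans (Finsupp.support_sub.trans ?_))
    refine Finset.union_subset (Finsupp.support_single_subset.trans ?_)
      (Finsupp.support_single_subset.trans ?_) <;> simp
  have hj' := h j hj
  have := hsub hmj
  simp only [Finset.mem_insert, Finset.mem_singleton] at this
  omega

lemma l1_eq_sum (x : ℤ →₀ ℂ) (s : Finset ℤ) (h : x.support ⊆ s) :
    l1 x = ∑ m ∈ s, ‖x m‖ := by
  refine Finset.sum_subset h ?_
  intro m _ hm
  simp [Finsupp.notMem_support_iff.mp hm]

lemma l1_nonneg (x : ℤ →₀ ℂ) : 0 ≤ l1 x :=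
  Finset.sum_nonneg fun _ _ => norm_nonneg _

lemma l1_add (x y : ℤ →₀ ℂ) : l1 (x + y) ≤ l1 x + l1 y := by
  have hs : (x + y).support ⊆ x.support ∪ y.support := Finsupp.support_add
  rw [l1_eq_sum (x+y) _ hs, l1_eq_sum x (x.support ∪ y.support) Finset.subset_union_left,
    l1_eq_sum y (x.support ∪ y.support) Finset.subset_union_right, ← Finset.sum_add_distrib]
  exact Finset.sum_le_sum fun m _ => by simpa using norm_add_le (x m) (y m)

lemma l1_smul (c : ℂ) (x : ℤ →₀ ℂ) : l1 (c • x) = ‖c‖ * l1 x := by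
  rw [l1_eq_sum (c • x) x.support Finsupp.support_smul, l1, Finset.mul_sum]
  exact Finset.sum_congr rfl fun m _ => by simp [norm_mul]

lemma l1_sum {ι : Type*} (s : Finset ι) (f : ι → (ℤ →₀ ℂ)) :
    l1 (∑ i ∈ s, f i) ≤ ∑ i ∈ s, l1 (f i) := by
  classical
  induction s using Finset.induction with
  | empty => simp [l1]
  | insert _ _ hi ih =>
    rw [Finset.sum_insert hi, Finset.sum_insert hi]
    exact le_trans (l1_add _ _) (by linarith)

lemma l1_single (m : ℤ) (c : ℂ) : l1 (Finsupp.single m c) ≤ ‖c‖ := by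
  rcases eq_or_ne c 0 with h | h
  · simp [h, l1]
  · rw [l1, Finsupp.support_single_ne_zero _ h, Finset.sum_singleton, Finsupp.single_eq_same]

lemma l1_sub_single (a b : ℤ) : l1 (Finsupp.single a (1:ℂ) - Finsupp.single b 1) ≤ 2 := by
  rw [sub_eq_add_neg]
  refine le_trans (l1_add _ _) ?_
  have : -Finsupp.single b (1:ℂ) = (-1 : ℂ) • Finsupp.single b (1:ℂ) := by simp
  rw [this, l1_smul]
  have := l1_single a (1:ℂ)
  have := l1_single b (1:ℂ)
  simp only [norm_one, norm_neg] at *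
  linarith

lemma l1_A0 (x : ℤ →₀ ℂ) (N : ℕ) (h : ∀ m ∈ x.support, m.natAbs ≤ N) :
    l1 (A0 x) ≤ 2 * N * l1 x := by
  rw [A0_apply]
  refine le_trans (l1_sum _ _) ?_
  rw [l1, Finset.mul_sum]
  refine Finset.sum_le_sum fun m hm => ?_
  rw [l1_smul, l1_smul]
  have h1 : ‖(-Complex.I * (m : ℂ))‖ = |(m : ℝ)| := by
    simp [norm_mul]
  have h2 : |(m : ℝ)| ≤ (N : ℝ) := by
    rw [← Int.cast_abs]
    exact_mod_cast le_trans (le_of_eq (Int.abs_eq_natAbs m)) (by exact_mod_cast h m hm)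
  have h3 := l1_sub_single (m+1) (m-1)
  have h4 := abs_nonneg ((m : ℝ))
  have h5 := norm_nonneg (x m)
  calc ‖x m‖ * (‖(-Complex.I * (m : ℂ))‖ * l1 _) = ‖x m‖ * (|(m:ℝ)| * l1 _) := by rw [h1]
    _ ≤ ‖x m‖ * ((N : ℝ) * 2) := by
        refine mul_le_mul_of_nonneg_left ?_ h5
        have hl := l1_nonneg (Finsupp.single (m+1) (1:ℂ) - Finsupp.single (m-1) 1)
        calc |(m:ℝ)| * l1 _ ≤ (N:ℝ) * l1 _ := mul_le_mul_of_nonneg_right h2 hl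
          _ ≤ (N:ℝ) * 2 := mul_le_mul_of_nonneg_left h3 (by positivity)
    _ = 2 * (N:ℝ) * ‖x m‖ := by ring

lemma l2_le_l1 (x : ℤ →₀ ℂ) : Real.sqrt (∑ m ∈ x.support, ‖x m‖ ^ 2) ≤ l1 x := by
  have h : ∑ m ∈ x.support, ‖x m‖ ^ 2 ≤ (l1 x) ^ 2 := by
    rw [l1, sq, Finset.sum_mul]
    refine Finset.sum_le_sum fun m hm => ?_
    rw [sq]
    exact mul_le_mul_of_nonneg_left
      (Finset.single_le_sum (fun i _ => norm_nonneg (x i)) hm) (norm_nonneg _)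
  calc Real.sqrt (∑ m ∈ x.support, ‖x m‖ ^ 2) ≤ Real.sqrt ((l1 x)^2) := Real.sqrt_le_sqrt h
    _ = l1 x := Real.sqrt_sq (l1_nonneg x)

lemma key (n : ℤ) (hn : n ≠ 0) (k : ℕ) :
    (∀ m ∈ ((A0 ^ k) (e n)).support, m.natAbs ≤ n.natAbs + k) ∧
    l1 ((A0 ^ k) (e n)) ≤
      2 ^ k * (Nat.factorial (n.natAbs + k - 1) : ℝ) / (Nat.factorial (n.natAbs - 1) : ℝ) := by
  have ha : 1 ≤ n.natAbs := Int.natAbs_pos.mpr hn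
  have hD : (0:ℝ) < (Nat.factorial (n.natAbs - 1) : ℝ) :=
    Nat.cast_pos.mpr (Nat.factorial_pos _)
  induction k with
  | zero =>
    have hone : (A0 ^ 0) (e n) = e n := by rw [pow_zero, Module.End.one_apply]
    constructor
    · intro m hm
      rw [hone] at hm
      have h := Finsupp.support_single_subset hm
      simp only [Finset.mem_singleton] at h
      subst h
      omega
    · rw [hone]
      have h1 := l1_single n (1:ℂ)
      have h2 : n.natAbs + 0 - 1 = n.natAbs - 1 := by omega
      rw [h2, pow_zero, one_mul, div_self (ne_of_gt hD)]
      simpa [e] using h1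
  | succ k ih =>
    have hsupp := A0_support _ _ ih.1
    have hpow : (A0 ^ (k+1)) (e n) = A0 ((A0 ^ k) (e n)) := by
      rw [pow_succ', Module.End.mul_apply]
    constructor
    · rw [hpow]
      intro m hm
      have := hsupp m hm
      omega
    · rw [hpow]
      have h1 := l1_A0 _ _ ih.1
      have h2 := ih.2
      have hfac : (n.natAbs + (k+1) - 1).factorial = (n.natAbs + k) * (n.natAbs + k - 1).factorial := by
        have h3 : n.natAbs + (k+1) - 1 = (n.natAbs + k - 1) + 1 := by omega
        have h4 : n.natAbs + k - 1 + 1 = n.natAbs + k := by omega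
        rw [h3, Nat.factorial_succ, h4]
      have hN : (0:ℝ) ≤ 2 * ((n.natAbs + k : ℕ) : ℝ) := by positivity
      calc l1 (A0 ((A0 ^ k) (e n))) ≤ 2 * ((n.natAbs + k : ℕ) : ℝ) * l1 ((A0 ^ k) (e n)) := h1
        _ ≤ 2 * ((n.natAbs + k : ℕ) : ℝ) *
            (2 ^ k * (Nat.factorial (n.natAbs + k - 1) : ℝ) / (Nat.factorial (n.natAbs - 1) : ℝ)) :=
          mul_le_mul_of_nonneg_left h2 hN
        _ = 2 ^ (k+1) * (Nat.factorial (n.natAbs + (k+1) - 1) : ℝ) / (Nat.factorial (n.natAbs - 1) : ℝ) := by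
          rw [hfac]
          push_cast
          ring

/-- For `n ≠ 0`, `‖A₀ᵏ eₙ‖ ≤ 2ᵏ (|n|+k-1)!/(|n|-1)!`. -/
theorem norm_A0_pow_e_le (k : ℕ) (n : ℤ) (hn : n ≠ 0) :
    l2norm ((A0 ^ k) (e n)) ≤
      2 ^ k * (Nat.factorial (n.natAbs + k - 1) : ℝ) / (Nat.factorial (n.natAbs - 1) : ℝ) := by
  rw [l2norm]
  exact le_trans (l2_le_l1 _) ((key n hn k).2)
end
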